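/- Consider the NPG update θ_{t+1} = θ_t + η·(X^T X)^{-1} X^T r with log-linear policy π_θ = softmax(Xθ), X of full column rank, constant η > 0. If the projection r̂ = X(X^T X)^{-1} X^T r satisfies r̂(a*) > r̂(a) for all a ≠ a*, where a* = argmax_a r(a), then for any initialization θ_1, π_{θ_t}(a*) → 1 as t → ∞. -/

import Mathlib

open Matrix Filter

noncomputable def softmaxPolicy {K d : ℕ} (X : Matrix (Fin K) (Fin d) ℝ)
    (θ : Fin d → ℝ) (a : Fin K) : ℝ :=
  Real.exp ((X *ᵥ θ) a) / ∑ a', Real.exp ((X *ᵥ θ) a')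

theorem npg_global_convergence {K d : ℕ} (X : Matrix (Fin K) (Fin d) ℝ)
    (r : Fin K → ℝ) (astar : Fin K)
    (hmax : ∀ a, a ≠ astar → r a < r astar)
    (hrank : IsUnit (Xᵀ * X).det)
    (η : ℝ) (hη : 0 < η)
    (θ : ℕ → Fin d → ℝ)
    (hupdate : ∀ t, θ (t + 1) = θ t + η • ((Xᵀ * X)⁻¹ *ᵥ (Xᵀ *ᵥ r)))
    (hproj : ∀ a, a ≠ astar →
      (X *ᵥ ((Xᵀ * X)⁻¹ *ᵥ (Xᵀ *ᵥ r))) a < (X *ᵥ ((Xᵀ * X)⁻¹ *ᵥ (Xᵀ *ᵥ r))) astar) :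
    Tendsto (fun t => softmaxPolicy X (θ t) astar) atTop (nhds 1) := by
  set w : Fin K → ℝ := X *ᵥ ((Xᵀ * X)⁻¹ *ᵥ (Xᵀ *ᵥ r)) with hw
  -- closed form for the logits
  have key : ∀ t a, (X *ᵥ θ t) a = (X *ᵥ θ 0) a + (t : ℝ) * η * w a := by
    intro t
    induction t with
    | zero => intro a; simp
    | succ n ih =>
      intro a
      rw [hupdate n, Matrix.mulVec_add, Matrix.mulVec_smul]
      have := ih a
      simp only [Pi.add_apply, Pi.smul_apply, smul_eq_mul]
      rw [this]
      push_cast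
      ring
  -- rewrite the policy as the inverse of a sum of exponentials of differences
  have hrewrite : ∀ t, softmaxPolicy X (θ t) astar =
      (∑ a', Real.exp ((X *ᵥ θ t) a' - (X *ᵥ θ t) astar))⁻¹ := by
    intro t
    unfold softmaxPolicy
    have hsum : (∑ a', Real.exp ((X *ᵥ θ t) a')) =
        Real.exp ((X *ᵥ θ t) astar) * ∑ a', Real.exp ((X *ᵥ θ t) a' - (X *ᵥ θ t) astar) := by
      rw [Finset.mul_sum]
      refine Finset.sum_congr rfl fun a _ => ?_
      rw [← Real.exp_add]; ring_nf
    rw [hsum, div_mul_cancel_left₀ (Real.exp_ne_zero _)]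
  simp only [hrewrite]
  -- the sum tends to 1
  have hsum : Tendsto (fun t => ∑ a', Real.exp ((X *ᵥ θ t) a' - (X *ᵥ θ t) astar))
      atTop (nhds 1) := by
    have : (1:ℝ) = ∑ a' : Fin K, (if a' = astar then (1:ℝ) else 0) := by simp
    rw [this]
    apply tendsto_finset_sum
    intro a _
    by_cases ha : a = astar
    · subst ha
      simp only [if_pos rfl, sub_self, Real.exp_zero]
      exact tendsto_const_nhds
    · simp only [if_neg ha]
      have hlt : w a - w astar < 0 := sub_neg.mpr (hproj a ha)
      have h1 : ∀ t : ℕ, (X *ᵥ θ t) a - (X *ᵥ θ t) astar =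
          ((X *ᵥ θ 0) a - (X *ᵥ θ 0) astar) + (t : ℝ) * (η * (w a - w astar)) := by
        intro t; rw [key t a, key t astar]; ring
      refine Tendsto.congr (fun t => congrArg Real.exp (h1 t).symm) ?_
      apply Real.tendsto_exp_atBot.comp
      apply tendsto_atBot_add_const_left
      have hηm : η * (w a - w astar) < 0 := mul_neg_of_pos_of_neg hη hlt
      exact Tendsto.atTop_mul_const_of_neg hηm tendsto_natCast_atTop_atTop
  have := hsum.inv₀ one_ne_zero
  simpa using this
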